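/- arXiv:1603.09617 — 2 statements merged into one kernel-verified Lean document; each statement's English description precedes it below -/
import Mathlib

section
/- Let H1 be a hypergraph, let C_p be an [M_p]-component of H1, let M_r ⊆ Fr(C_p), let C_r be an [M_r]-component of H1 such that C_p ∪ C_r is [M_p ∩ M_r]-connected, and let M_s ⊆ Fr(C_r). Define ED = (M_r ∩ Fr(C_r)) \ M_s, set M_r' = M_r \ ED, and let C_r' be the [M_r']-component of H1 containing C_r ∪ ED. Then: (a) every [M_r]-component C of H1 such that C_p ∪ C is [M_p ∩ M_r]-connected either satisfies C ⊆ C_r' or is an [M_r']-component such that C_p ∪ C is [M_p ∩ M_r']-connected; (b) every [M_r']-component C' ≠ C_r' of H1 such that C_p ∪ C' is [M_p ∩ M_r']-connected is an [M_r]-component such that C_p ∪ C' is [M_p ∩ M_r]-connected. -/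
/-! Common definitions: hypergraphs, components, the Robber and Captain game,
the Robber and Marshal game, tree projections, (generalized) hypertree decompositions. -/

variable {α : Type} [DecidableEq α]

/-- A hypergraph: a finite set of nodes and a finite set of hyperedges, each a subset of the
nodes, such that every node occurs in some hyperedge. -/
structure FinHypergraph (α : Type) [DecidableEq α] where
  nodes : Finset α
  edges : Finset (Finset α)
  edge_sub : ∀ h ∈ edges, h ⊆ nodes
  cover : ∀ x ∈ nodes, ∃ h ∈ edges, x ∈ h

namespace FinHypergraph

/-- `X` and `Y` are `[M]`-adjacent: some hyperedge `h` satisfies `{X,Y} ⊆ h \ M`. -/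
def MAdj (H : FinHypergraph α) (M : Finset α) (X Y : α) : Prop :=
  ∃ h ∈ H.edges, X ∈ h ∧ Y ∈ h ∧ X ∉ M ∧ Y ∉ M

/-- An `[M]`-path: a sequence of consecutively `[M]`-adjacent nodes. -/
def MPath (H : FinHypergraph α) (M : Finset α) : α → α → Prop :=
  Relation.ReflTransGen (H.MAdj M)

/-- `W` is `[M]`-connected: every two nodes of `W` are joined by an `[M]`-path. -/
def MConn (H : FinHypergraph α) (M W : Finset α) : Prop :=
  ∀ X ∈ W, ∀ Y ∈ W, H.MPath M X Y

/-- `C` is an `[M]`-component: a maximal `[M]`-connected nonempty subset of `nodes(H) \ M`. -/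
def MComp (H : FinHypergraph α) (M C : Finset α) : Prop :=
  C.Nonempty ∧ C ⊆ H.nodes \ M ∧ H.MConn M C ∧
    ∀ C' : Finset α, C ⊆ C' → C' ⊆ H.nodes \ M → H.MConn M C' → C' = C

/-- The frontier `Fr(C)`: the union of all hyperedges of `H` meeting `C`. -/
def Fr (H : FinHypergraph α) (C : Finset α) : Finset α :=
  (H.edges.filter fun h => (h ∩ C).Nonempty).sup id

/-- The border `∂C = Fr(C) \ C`. -/
def border (H : FinHypergraph α) (C : Finset α) : Finset α := H.Fr C \ C

/-- `H1 ≤ H2`: every hyperedge of `H1` is contained in some hyperedge of `H2`. -/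
def HLE (H1 H2 : FinHypergraph α) : Prop := ∀ h ∈ H1.edges, ∃ h' ∈ H2.edges, h ⊆ h'

/-- `H` is acyclic iff it has a join tree: a tree on the hyperedges of `H` such that, for every
node `X`, the set of hyperedges containing `X` induces a connected subtree. -/
def IsAcyclicHG (H : FinHypergraph α) : Prop :=
  ∃ T : SimpleGraph {h : Finset α // h ∈ H.edges},
    T.IsTree ∧ ∀ X ∈ H.nodes,
      (T.induce {e : {h : Finset α // h ∈ H.edges} | X ∈ e.1}).Connected

/-- `H^k`: the hypergraph over the same nodes whose hyperedges are all unions of at most `k`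
(and at least one) hyperedges of `H`. -/
def pow (H : FinHypergraph α) (k : ℕ) (hk : 1 ≤ k) : FinHypergraph α where
  nodes := H.nodes
  edges := (H.edges.powerset.filter fun S => S.Nonempty ∧ S.card ≤ k).image fun S => S.sup id
  edge_sub := by
    intro h hh
    simp only [Finset.mem_image, Finset.mem_filter, Finset.mem_powerset] at hh
    obtain ⟨S, ⟨hS, _, _⟩, rfl⟩ := hh
    exact Finset.sup_le fun i hi => H.edge_sub i (hS hi)
  cover := by
    intro x hx
    obtain ⟨h, hh, hxh⟩ := H.cover x hx
    refine ⟨h, ?_, hxh⟩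
    simp only [Finset.mem_image, Finset.mem_filter, Finset.mem_powerset]
    exact ⟨{h}, ⟨Finset.singleton_subset_iff.mpr hh, Finset.singleton_nonempty h,
      by simpa using hk⟩, by simp⟩

/-- The simplicial version of `H`: same nodes, and hyperedges all nonempty subsets of
hyperedges of `H`. -/
def simplicial (H : FinHypergraph α) : FinHypergraph α where
  nodes := H.nodes
  edges := (H.edges.biUnion Finset.powerset).filter fun s => s.Nonempty
  edge_sub := by
    intro h hh
    simp only [Finset.mem_filter, Finset.mem_biUnion, Finset.mem_powerset] at hh
    obtain ⟨⟨e, he, hsub⟩, -⟩ := hh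
    exact hsub.trans (H.edge_sub e he)
  cover := by
    intro x hx
    obtain ⟨h, hh, hxh⟩ := H.cover x hx
    refine ⟨h, ?_, hxh⟩
    simp only [Finset.mem_filter, Finset.mem_biUnion, Finset.mem_powerset]
    exact ⟨⟨h, hh, le_refl _⟩, ⟨x, hxh⟩⟩

end FinHypergraph

/-- A tree projection of `H1` with respect to `H2`: an acyclic hypergraph `Ha` over the nodes
of `H1` with `H1 ≤ Ha ≤ H2`. -/
def IsTreeProjection (Ha H1 H2 : FinHypergraph α) : Prop :=
  Ha.nodes = H1.nodes ∧ Ha.IsAcyclicHG ∧ FinHypergraph.HLE H1 Ha ∧ FinHypergraph.HLE Ha H2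

def HasTreeProjection (H1 H2 : FinHypergraph α) : Prop := ∃ Ha, IsTreeProjection Ha H1 H2

/-! ### The Robber and Captain game -/

/-- A configuration `(h, M, C)`. -/
abbrev Config (α : Type) := Finset α × Finset α × Finset α

/-- The initial configuration `(∅, ∅, nodes(H1))`. -/
def initConfig (H1 : FinHypergraph α) : Config α := (∅, ∅, H1.nodes)

/-- `Cr` is a `[v, Mr]`-option: an `[Mr]`-component `Cr` of `H1` such that `C ∪ Cr` is
`[M ∩ Mr]`-connected, where `v = (h, M, C)`. -/
def IsOption (H1 : FinHypergraph α) (v : Config α) (Mr Cr : Finset α) : Prop :=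
  H1.MComp Mr Cr ∧ H1.MConn (v.2.1 ∩ Mr) (v.2.2 ∪ Cr)

/-- The successor relation of the strategy graph (arcs from a configuration in the domain to the
configurations resulting from the Captain's move and the Robber's choice of an option). -/
def StratSucc (H1 : FinHypergraph α) (dom : Set (Config α))
    (mv : Config α → Finset α × Finset α) (a b : Config α) : Prop :=
  a ∈ dom ∧ b.1 = (mv a).1 ∧ b.2.1 = (mv a).2 ∧ IsOption H1 a (mv a).2 b.2.2

/-- A strategy for the Captain in the Robber and Captain game on `(H1, H2)`. -/
structure Strategy (H1 H2 : FinHypergraph α) where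
  dom : Set (Config α)
  move : Config α → Finset α × Finset α
  init_mem : initConfig H1 ∈ dom
  valid : ∀ v ∈ dom, v = initConfig H1 ∨
    (v.1 ∈ H2.edges ∧ v.2.1 ⊆ v.1 ∧ H1.MComp v.2.1 v.2.2)
  move_edge : ∀ v ∈ dom, (move v).1 ∈ H2.edges
  move_sub : ∀ v ∈ dom, (move v).2 ⊆ (move v).1 ∩ H1.Fr v.2.2
  closed : ∀ v ∈ dom, ∀ Cr : Finset α,
    IsOption H1 v (move v).2 Cr → ((move v).1, (move v).2, Cr) ∈ dom
  reach : ∀ v ∈ dom, Relation.ReflTransGen (StratSucc H1 dom move) (initConfig H1) v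

namespace Strategy

variable {H1 H2 : FinHypergraph α}

/-- The arc relation of the strategy graph `G(σ)`. -/
def Succ (σ : Strategy H1 H2) : Config α → Config α → Prop :=
  StratSucc H1 σ.dom σ.move

/-- `σ` is winning iff its strategy graph is acyclic. -/
def Winning (σ : Strategy H1 H2) : Prop :=
  ∀ v : Config α, ¬ Relation.TransGen σ.Succ v v

/-- `σ` is monotone: every move is monotone, i.e. every option shrinks the component. -/
def IsMonotone (σ : Strategy H1 H2) : Prop :=
  ∀ v ∈ σ.dom, ∀ Cr : Finset α, IsOption H1 v (σ.move v).2 Cr → Cr ⊆ v.2.2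

/-- `σ` is greedy: at `v = (h_p, M_p, C_p)` the move `(h_r, M_r)` satisfies
`M_r = h_r ∩ Fr(C_p)`, with `h_r = h_p` whenever `h_p ∩ C_p ≠ ∅` (otherwise `h_r` is an
arbitrary hyperedge of `H2`, which is guaranteed by `move_edge`). -/
def Greedy (σ : Strategy H1 H2) : Prop :=
  ∀ v ∈ σ.dom, (σ.move v).2 = (σ.move v).1 ∩ H1.Fr v.2.2 ∧
    ((v.1 ∩ v.2.2).Nonempty → (σ.move v).1 = v.1)

/-- `σ` is nice: `σ(h_p, M_p, C_p) = (h_p, ∂C_p)` whenever `∂C_p ⊂ M_p`. -/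
def Nice (σ : Strategy H1 H2) : Prop :=
  ∀ v ∈ σ.dom, H1.border v.2.2 ⊂ v.2.1 → σ.move v = (v.1, H1.border v.2.2)

end Strategy

/-! ### The Robber and Marshal game -/

/-- A configuration `(h, C)` of the Robber and Marshal game. -/
abbrev MConfig (α : Type) := Finset α × Finset α

/-- The Robber's options in the Robber and Marshal game: `Cr` is an `[hr]`-component such that
`C ∪ Cr` is `[h ∩ hr]`-connected, where `v = (h, C)`. -/
def MarshalOption (H1 : FinHypergraph α) (v : MConfig α) (hr Cr : Finset α) : Prop :=
  H1.MComp hr Cr ∧ H1.MConn (v.1 ∩ hr) (v.2 ∪ Cr)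

/-- The successor relation of the Robber and Marshal game under a given Marshal strategy. -/
def MarSucc (H1 : FinHypergraph α) (dom : Set (MConfig α)) (mv : MConfig α → Finset α)
    (a b : MConfig α) : Prop :=
  a ∈ dom ∧ ¬ a.2 ⊆ a.1 ∧ b.1 = mv a ∧
    (MarshalOption H1 a (mv a) b.2 ∨
      ((¬ ∃ Cr : Finset α, MarshalOption H1 a (mv a) Cr) ∧ b.2 = ∅))

/-- A strategy for the Marshal in the Robber and Marshal game on `(H1, H2)`.
A configuration `(h, C)` with `C ⊆ h` is a capture configuration; at any other configuration of
the domain the Marshal moves to a hyperedge of `H2`. -/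
structure MarshalStrategy (H1 H2 : FinHypergraph α) where
  dom : Set (MConfig α)
  move : MConfig α → Finset α
  init_mem : (∅, H1.nodes) ∈ dom
  valid : ∀ v ∈ dom, v = ((∅ : Finset α), H1.nodes) ∨
    (v.1 ∈ H2.edges ∧ (H1.MComp v.1 v.2 ∨ v.2 = ∅))
  move_edge : ∀ v ∈ dom, ¬ v.2 ⊆ v.1 → move v ∈ H2.edges
  closed : ∀ v ∈ dom, ¬ v.2 ⊆ v.1 → ∀ Cr : Finset α,
    MarshalOption H1 v (move v) Cr → (move v, Cr) ∈ dom
  closed_cap : ∀ v ∈ dom, ¬ v.2 ⊆ v.1 →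
    (¬ ∃ Cr : Finset α, MarshalOption H1 v (move v) Cr) → ((move v, ∅) : MConfig α) ∈ dom
  reach : ∀ v ∈ dom,
    Relation.ReflTransGen (MarSucc H1 dom move) ((∅ : Finset α), H1.nodes) v

namespace MarshalStrategy

variable {H1 H2 : FinHypergraph α}

/-- The Marshal wins: starting from the initial configuration the game always ends in a capture
configuration; equivalently, the game graph of the strategy is acyclic. -/
def Winning (μ : MarshalStrategy H1 H2) : Prop :=
  ∀ v : MConfig α, ¬ Relation.TransGen (MarSucc H1 μ.dom μ.move) v v

/-- The Marshal strategy is monotone: in every move, every available component shrinks. -/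
def IsMonotone (μ : MarshalStrategy H1 H2) : Prop :=
  ∀ v ∈ μ.dom, ¬ v.2 ⊆ v.1 → ∀ Cr : Finset α, MarshalOption H1 v (μ.move v) Cr → Cr ⊆ v.2

end MarshalStrategy

/-! ### Rooted trees and (generalized) hypertree decompositions -/

/-- A finite rooted tree, encoded by a parent function on `Fin (size+1)`. -/
structure RTree where
  size : ℕ
  parent : Fin (size + 1) → Fin (size + 1)
  root : Fin (size + 1)
  parent_root : parent root = root
  reach_root : ∀ v, ∃ m : ℕ, parent^[m] v = root

namespace RTree

/-- Adjacency in the rooted tree. -/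
def Adj (T : RTree) (a b : Fin (T.size + 1)) : Prop :=
  a ≠ b ∧ (T.parent a = b ∨ T.parent b = a)

/-- A set of vertices induces a connected subtree. -/
def ConnIn (T : RTree) (S : Set (Fin (T.size + 1))) : Prop :=
  ∀ a ∈ S, ∀ b ∈ S,
    Relation.ReflTransGen (fun x y => T.Adj x y ∧ x ∈ S ∧ y ∈ S) a b

/-- `q` is a vertex of the subtree rooted at `p` (i.e. a descendant of `p`). -/
def Desc (T : RTree) (p q : Fin (T.size + 1)) : Prop :=
  ∃ m : ℕ, T.parent^[m] q = p

end RTree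

/-- A generalized hypertree decomposition of `H`. -/
structure GHDec (H : FinHypergraph α) where
  T : RTree
  chi : Fin (T.size + 1) → Finset α
  lam : Fin (T.size + 1) → Finset (Finset α)
  chi_sub : ∀ p, chi p ⊆ H.nodes
  lam_sub : ∀ p, lam p ⊆ H.edges
  edge_cover : ∀ h ∈ H.edges, ∃ p, h ⊆ chi p
  conn : ∀ Y ∈ H.nodes, T.ConnIn {p | Y ∈ chi p}
  chi_cov : ∀ p, chi p ⊆ (lam p).sup id

namespace GHDec

variable {H : FinHypergraph α}

/-- The decomposition has width at most `k`. -/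
def WidthLE (D : GHDec H) (k : ℕ) : Prop := ∀ p, (D.lam p).card ≤ k

/-- Condition (4) of hypertree decompositions: for every vertex `p`, the intersection of
`⋃ λ(p)` with `⋃_{q in the subtree rooted at p} χ(q)` is contained in `χ(p)`. -/
def IsHD (D : GHDec H) : Prop :=
  ∀ p, ∀ x ∈ (D.lam p).sup id, (∃ q, D.T.Desc p q ∧ x ∈ D.chi q) → x ∈ D.chi p

end GHDec

section Aux

variable {α : Type} [DecidableEq α] (H : FinHypergraph α)

lemma madj_symm {M : Finset α} {X Y : α} (h : H.MAdj M X Y) : H.MAdj M Y X := by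
  obtain ⟨e, he, hX, hY, hXM, hYM⟩ := h
  exact ⟨e, he, hY, hX, hYM, hXM⟩

lemma mpath_symm {M : Finset α} {X Y : α} (h : H.MPath M X Y) : H.MPath M Y X := by
  induction h with
  | refl => exact .refl
  | tail _ h ih => exact .trans (.single (madj_symm H h)) ih

lemma madj_mono {M M' : Finset α} (hMM : M' ⊆ M) {X Y : α} (h : H.MAdj M X Y) :
    H.MAdj M' X Y := by
  obtain ⟨e, he, hX, hY, hXM, hYM⟩ := h
  exact ⟨e, he, hX, hY, fun hh => hXM (hMM hh), fun hh => hYM (hMM hh)⟩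

lemma mpath_mono {M M' : Finset α} (hMM : M' ⊆ M) {X Y : α} (h : H.MPath M X Y) :
    H.MPath M' X Y :=
  Relation.ReflTransGen.mono (fun _ _ hh => madj_mono H hMM hh) _ _ h

lemma mconn_mono {M M' W : Finset α} (hMM : M' ⊆ M) (h : H.MConn M W) : H.MConn M' W :=
  fun X hX Y hY => mpath_mono H hMM (h X hX Y hY)

lemma mem_nodes_of_madj {M : Finset α} {X Y : α} (h : H.MAdj M X Y) : Y ∈ H.nodes := by
  obtain ⟨e, he, _, hY, _, _⟩ := h
  exact H.edge_sub e he hY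

lemma notmem_of_madj {M : Finset α} {X Y : α} (h : H.MAdj M X Y) : Y ∉ M := by
  obtain ⟨e, he, _, _, _, hYM⟩ := h
  exact hYM

lemma notmem_of_mpath {M : Finset α} {X Y : α} (h : H.MPath M X Y) (hX : X ∉ M) : Y ∉ M := by
  induction h with
  | refl => exact hX
  | tail _ h _ => exact notmem_of_madj H h

lemma mem_nodes_of_mpath {M : Finset α} {X Y : α} (h : H.MPath M X Y) (hX : X ∈ H.nodes) :
    Y ∈ H.nodes := by
  induction h with
  | refl => exact hX
  | tail _ h _ => exact mem_nodes_of_madj H h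

lemma comp_closed {M C : Finset α} (hC : H.MComp M C) {X Y : α} (hX : X ∈ C)
    (h : H.MAdj M X Y) : Y ∈ C := by
  obtain ⟨hne, hsub, hconn, hmax⟩ := hC
  have hYn : Y ∈ H.nodes := mem_nodes_of_madj H h
  have hYM : Y ∉ M := notmem_of_madj H h
  have hkey : insert Y C = C := by
    apply hmax
    · exact Finset.subset_insert _ _
    · intro z hz
      rcases Finset.mem_insert.1 hz with rfl | hz
      · exact Finset.mem_sdiff.2 ⟨hYn, hYM⟩
      · exact hsub hz
    · intro a ha b hb
      have pY : ∀ c ∈ insert Y C, H.MPath M c Y := by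
        intro c hc
        rcases Finset.mem_insert.1 hc with rfl | hc
        · exact .refl
        · exact (hconn c hc X hX).tail h
      exact (pY a ha).trans (mpath_symm H (pY b hb))
  exact hkey ▸ Finset.mem_insert_self Y C

lemma mem_comp_of_mpath {M C : Finset α} (hC : H.MComp M C) {X Y : α} (hX : X ∈ C)
    (h : H.MPath M X Y) : Y ∈ C := by
  induction h with
  | refl => exact hX
  | tail _ h ih => exact comp_closed H hC ih h

lemma comp_eq_of_mem {M C D : Finset α} (hC : H.MComp M C) (hD : H.MComp M D) {X : α}
    (hXC : X ∈ C) (hXD : X ∈ D) : C = D := by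
  have hsub : C ∪ D ⊆ H.nodes \ M := Finset.union_subset hC.2.1 hD.2.1
  have hconn : H.MConn M (C ∪ D) := by
    have hX : ∀ a ∈ C ∪ D, H.MPath M a X := by
      intro a ha
      rcases Finset.mem_union.1 ha with ha | ha
      · exact hC.2.2.1 a ha X hXC
      · exact hD.2.2.1 a ha X hXD
    intro a ha b hb
    exact (hX a ha).trans (mpath_symm H (hX b hb))
  have h1 : C ∪ D = C := hC.2.2.2 _ Finset.subset_union_left hsub hconn
  have h2 : C ∪ D = D := hD.2.2.2 _ Finset.subset_union_right hsub hconn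
  rw [← h1, h2]

lemma exists_comp {M : Finset α} {X : α} (hX : X ∈ H.nodes) (hXM : X ∉ M) :
    ∃ C, H.MComp M C ∧ X ∈ C := by
  classical
  refine ⟨H.nodes.filter (fun y => H.MPath M X y), ⟨⟨X, ?_⟩, ?_, ?_, ?_⟩, ?_⟩
  · exact Finset.mem_filter.2 ⟨hX, .refl⟩
  · intro z hz
    obtain ⟨hzN, hzp⟩ := Finset.mem_filter.1 hz
    exact Finset.mem_sdiff.2 ⟨hzN, notmem_of_mpath H hzp hXM⟩
  · intro a ha b hb
    exact (mpath_symm H (Finset.mem_filter.1 ha).2).trans (Finset.mem_filter.1 hb).2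
  · intro C' hsub hsub' hconn
    apply Finset.Subset.antisymm _ hsub
    intro z hz
    have hXC' : X ∈ C' := hsub (Finset.mem_filter.2 ⟨hX, .refl⟩)
    have hzN : z ∈ H.nodes := (Finset.mem_sdiff.1 (hsub' hz)).1
    exact Finset.mem_filter.2 ⟨hzN, hconn X hXC' z hz⟩
  · exact Finset.mem_filter.2 ⟨hX, .refl⟩

/-- Upgrading connectivity of a component to a larger separator it avoids. -/
lemma mconn_upgrade {M M' D : Finset α} (hD : H.MComp M' D) (hdisj : ∀ z ∈ D, z ∉ M) :
    H.MConn M D := by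
  intro X hX Y hY
  have key : ∀ Y, H.MPath M' X Y → Y ∈ D → H.MPath M X Y := by
    intro Y h
    induction h with
    | refl => intro _; exact .refl
    | @tail Z Y hXZ hZY ih =>
      intro hYD
      have hZD : Z ∈ D := comp_closed H hD hYD (madj_symm H hZY)
      obtain ⟨e, he, hZe, hYe, _, _⟩ := hZY
      exact (ih hZD).tail ⟨e, he, hZe, hYe, hdisj _ hZD, hdisj _ hYD⟩
  exact key Y (hD.2.2.1 X hX Y hY) hY

lemma mem_Fr {C : Finset α} {x : α} :
    x ∈ H.Fr C ↔ ∃ h ∈ H.edges, x ∈ h ∧ (h ∩ C).Nonempty := by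
  unfold FinHypergraph.Fr
  simp only [Finset.mem_sup, Finset.mem_filter, id_eq]
  constructor
  · rintro ⟨i, ⟨hi, hni⟩, hx⟩
    exact ⟨i, hi, hx, hni⟩
  · rintro ⟨h, hh, hx, hn⟩
    exact ⟨h, ⟨hh, hn⟩, hx⟩

end Aux

/-- Lemma, parts (2) and (3): with `ED = (M_r ∩ Fr(C_r)) \ M_s`,
`M_r' = M_r \ ED` and `C_r'` the `[M_r']`-component containing `C_r ∪ ED`:
(a) every `[M_r]`-component `C` with `C_p ∪ C` being `[M_p ∩ M_r]`-connected either satisfies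
`C ⊆ C_r'` or is an `[M_r']`-component with `C_p ∪ C` being `[M_p ∩ M_r']`-connected;
(b) every `[M_r']`-component `C' ≠ C_r'` with `C_p ∪ C'` being `[M_p ∩ M_r']`-connected is an
`[M_r]`-component with `C_p ∪ C'` being `[M_p ∩ M_r]`-connected. -/
theorem options_transfer {α : Type} [DecidableEq α] (H1 : FinHypergraph α)
    (Mp Cp Mr Cr Ms : Finset α)
    (hCp : H1.MComp Mp Cp) (hMr : Mr ⊆ H1.Fr Cp)
    (hCr : H1.MComp Mr Cr) (hc : H1.MConn (Mp ∩ Mr) (Cp ∪ Cr))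
    (hMs : Ms ⊆ H1.Fr Cr)
    (ED Mr' Cr' : Finset α)
    (hED : ED = (Mr ∩ H1.Fr Cr) \ Ms) (hMr' : Mr' = Mr \ ED)
    (hCr' : H1.MComp Mr' Cr') (hsub : Cr ∪ ED ⊆ Cr') :
    (∀ C : Finset α, H1.MComp Mr C → H1.MConn (Mp ∩ Mr) (Cp ∪ C) →
        C ⊆ Cr' ∨ (H1.MComp Mr' C ∧ H1.MConn (Mp ∩ Mr') (Cp ∪ C))) ∧
    (∀ C' : Finset α, H1.MComp Mr' C' → H1.MConn (Mp ∩ Mr') (Cp ∪ C') → C' ≠ Cr' →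
        H1.MComp Mr C' ∧ H1.MConn (Mp ∩ Mr) (Cp ∪ C')) := by
  -- basic inclusions
  have hEDMr : ED ⊆ Mr := by
    rw [hED]; exact Finset.sdiff_subset.trans Finset.inter_subset_left
  have hMr'Mr : Mr' ⊆ Mr := by rw [hMr']; exact Finset.sdiff_subset
  have hmemED : ∀ z, z ∈ Mr → z ∉ Mr' → z ∈ ED := by
    intro z hz hz'
    by_contra hzE
    exact hz' (hMr' ▸ Finset.mem_sdiff.2 ⟨hz, hzE⟩)
  have hEDCr' : ED ⊆ Cr' := fun z hz => hsub (Finset.mem_union_right _ hz)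
  have hMpMr : Mp ∩ Mr' ⊆ Mp ∩ Mr :=
    Finset.inter_subset_inter (Finset.Subset.refl _) hMr'Mr
  constructor
  · -- part (a)
    intro C hC hCc
    obtain ⟨y, hy⟩ := hC.1
    have hyN : y ∈ H1.nodes := (Finset.mem_sdiff.1 (hC.2.1 hy)).1
    have hyMr : y ∉ Mr := (Finset.mem_sdiff.1 (hC.2.1 hy)).2
    have hyMr' : y ∉ Mr' := fun h => hyMr (hMr'Mr h)
    obtain ⟨D, hD, hyD⟩ := exists_comp H1 hyN hyMr'
    have hCD : C ⊆ D := fun c hc =>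
      mem_comp_of_mpath H1 hD hyD (mpath_mono H1 hMr'Mr (hC.2.2.1 y hy c hc))
    by_cases hDC : D = Cr'
    · exact Or.inl (hDC ▸ hCD)
    · right
      have hDMr : ∀ w ∈ D, w ∉ Mr := by
        intro w hw hwMr
        have hwMr' : w ∉ Mr' := (Finset.mem_sdiff.1 (hD.2.1 hw)).2
        exact hDC (comp_eq_of_mem H1 hD hCr' hw (hEDCr' (hmemED w hwMr hwMr')))
      have hconnD : H1.MConn Mr D := mconn_upgrade H1 hD hDMr
      have hDsub : D ⊆ H1.nodes \ Mr := by
        intro w hw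
        exact Finset.mem_sdiff.2 ⟨(Finset.mem_sdiff.1 (hD.2.1 hw)).1, hDMr w hw⟩
      have hDCeq : D = C := hC.2.2.2 D hCD hDsub hconnD
      exact ⟨hDCeq ▸ hD, mconn_mono H1 hMpMr hCc⟩
  · -- part (b)
    intro C' hC' hconn' hne
    have hC'Mr : ∀ w ∈ C', w ∉ Mr := by
      intro w hw hwMr
      have hwMr' : w ∉ Mr' := (Finset.mem_sdiff.1 (hC'.2.1 hw)).2
      exact hne (comp_eq_of_mem H1 hC' hCr' hw (hEDCr' (hmemED w hwMr hwMr')))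
    have hC'sub : C' ⊆ H1.nodes \ Mr := by
      intro w hw
      exact Finset.mem_sdiff.2 ⟨(Finset.mem_sdiff.1 (hC'.2.1 hw)).1, hC'Mr w hw⟩
    have hC'conn : H1.MConn Mr C' := mconn_upgrade H1 hC' hC'Mr
    have hC'comp : H1.MComp Mr C' := by
      refine ⟨hC'.1, hC'sub, hC'conn, ?_⟩
      intro C'' h1 h2 h3
      refine hC'.2.2.2 C'' h1 ?_ (mconn_mono H1 hMr'Mr h3)
      intro w hw
      have := Finset.mem_sdiff.1 (h2 hw)
      exact Finset.mem_sdiff.2 ⟨this.1, fun hh => this.2 (hMr'Mr hh)⟩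
    refine ⟨hC'comp, ?_⟩
    -- bridge: find x0 ∈ Cp and y ∈ C' joined by an (Mp ∩ Mr)-path
    obtain ⟨x, hx⟩ := hCp.1
    obtain ⟨y, hy⟩ := hC'.1
    have hpath : H1.MPath (Mp ∩ Mr') x y :=
      hconn' x (Finset.mem_union_left _ hx) y (Finset.mem_union_right _ hy)
    have hyMr : y ∉ Mr := hC'Mr y hy
    have key : ∀ z, H1.MPath (Mp ∩ Mr') z y →
        ((z ∉ Mr ∧ H1.MPath (Mp ∩ Mr) z y ∧ H1.MPath Mr' z y) ∨
          (∃ x0 ∈ Cp, H1.MPath (Mp ∩ Mr) x0 y) ∨ y ∈ Cr') := by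
      intro z hz
      induction hz using Relation.ReflTransGen.head_induction_on with
      | refl => exact Or.inl ⟨hyMr, .refl, .refl⟩
      | head hadj hrest ih =>
        rcases ih with ⟨hcMr, hcpath, hcpath'⟩ | hrem
        · rename_i z c
          obtain ⟨e, he, hze, hce, hzM, hcM⟩ := hadj
          have hcMr' : c ∉ Mr' := fun h => hcMr (hMr'Mr h)
          by_cases hzMr : z ∈ Mr
          · by_cases hzMp : z ∈ Mp
            · -- z ∈ ED, hence the rest of the walk lies in Cr'
              have hzMr' : z ∉ Mr' := fun h => hzM (Finset.mem_inter.2 ⟨hzMp, h⟩)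
              have hzCr' : z ∈ Cr' := hEDCr' (hmemED z hzMr hzMr')
              have hcCr' : c ∈ Cr' :=
                comp_closed H1 hCr' hzCr' ⟨e, he, hze, hce, hzMr', hcMr'⟩
              exact Or.inr (Or.inr (mem_comp_of_mpath H1 hCr' hcCr' hcpath'))
            · -- z ∈ Mr \ Mp ⊆ Fr(Cp): splice through Cp
              obtain ⟨g, hg, hzg, hgn⟩ := (mem_Fr H1).1 (hMr hzMr)
              obtain ⟨p0, hp0⟩ := hgn
              have hp0g : p0 ∈ g := (Finset.mem_inter.1 hp0).1
              have hp0Cp : p0 ∈ Cp := (Finset.mem_inter.1 hp0).2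
              have hp0Mp : p0 ∉ Mp := (Finset.mem_sdiff.1 (hCp.2.1 hp0Cp)).2
              have adj1 : H1.MAdj (Mp ∩ Mr) p0 z :=
                ⟨g, hg, hp0g, hzg, fun h => hp0Mp (Finset.mem_inter.1 h).1,
                  fun h => hzMp (Finset.mem_inter.1 h).1⟩
              have adj2 : H1.MAdj (Mp ∩ Mr) z c :=
                ⟨e, he, hze, hce, fun h => hzMp (Finset.mem_inter.1 h).1,
                  fun h => hcMr (Finset.mem_inter.1 h).2⟩
              exact Or.inr (Or.inl ⟨p0, hp0Cp,
                ((Relation.ReflTransGen.single adj1).tail adj2).trans hcpath⟩)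
          · -- z ∉ Mr: extend both carried paths
            have hzMr' : z ∉ Mr' := fun h => hzMr (hMr'Mr h)
            have adjMpMr : H1.MAdj (Mp ∩ Mr) z c :=
              ⟨e, he, hze, hce, fun h => hzMr (Finset.mem_inter.1 h).2,
                fun h => hcMr (Finset.mem_inter.1 h).2⟩
            have adjMr' : H1.MAdj Mr' z c := ⟨e, he, hze, hce, hzMr', hcMr'⟩
            exact Or.inl ⟨hzMr, hcpath.head adjMpMr, hcpath'.head adjMr'⟩
        · exact Or.inr hrem
    have bridge : ∃ x0 ∈ Cp, H1.MPath (Mp ∩ Mr) x0 y := by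
      rcases key x hpath with ⟨_, p, _⟩ | ⟨x0, hx0, p⟩ | hyCr'
      · exact ⟨x, hx, p⟩
      · exact ⟨x0, hx0, p⟩
      · exact absurd (comp_eq_of_mem H1 hC' hCr' hy hyCr') hne
    obtain ⟨x0, hx0, hbr⟩ := bridge
    -- assemble connectivity of Cp ∪ C'
    have hCpMp : Mp ∩ Mr ⊆ Mp := Finset.inter_subset_left
    have hMrMp : Mp ∩ Mr ⊆ Mr := Finset.inter_subset_right
    have toy : ∀ Z ∈ Cp ∪ C', H1.MPath (Mp ∩ Mr) Z y := by
      intro Z hZ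
      rcases Finset.mem_union.1 hZ with hZ | hZ
      · exact (mpath_mono H1 hCpMp (hCp.2.2.1 Z hZ x0 hx0)).trans hbr
      · exact mpath_mono H1 hMrMp (hC'conn Z hZ y hy)
    intro X hX Y hY
    exact (toy X hX).trans (mpath_symm H1 (toy Y hY))
end

section
/- Let H1 be a hypergraph, let C_r be an [M_r]-component of H1, and let M_s ⊆ Fr(C_r). Then every [M_s]-component C of H1 such that C_r ∪ C is [M_r ∩ M_s]-connected satisfies C ⊆ C_r if, and only if, (M_r ∩ Fr(C_r)) \ M_s = ∅. -/
/-! Common definitions: hypergraphs, components, the Robber and Captain game,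
the Robber and Marshal game, tree projections, (generalized) hypertree decompositions. -/

variable {α : Type} [DecidableEq α]

private lemma madj_symm' {α : Type} [DecidableEq α] (H1 : FinHypergraph α) (M : Finset α) :
    Symmetric (H1.MAdj M) := by
  rintro x y ⟨h, hh, hx, hy, hnx, hny⟩
  exact ⟨h, hh, hy, hx, hny, hnx⟩

private lemma madj_mono' {α : Type} [DecidableEq α] (H1 : FinHypergraph α) {M M' : Finset α}
    (hMM : M' ⊆ M) {x y : α} (hadj : H1.MAdj M x y) : H1.MAdj M' x y := by
  obtain ⟨h, hh, hx, hy, hnx, hny⟩ := hadj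
  exact ⟨h, hh, hx, hy, fun c => hnx (hMM c), fun c => hny (hMM c)⟩

private lemma mpath_mono' {α : Type} [DecidableEq α] (H1 : FinHypergraph α) {M M' : Finset α}
    (hMM : M' ⊆ M) {x y : α} (hp : H1.MPath M x y) : H1.MPath M' x y :=
  Relation.ReflTransGen.mono (fun _ _ h => madj_mono' H1 hMM h) _ _ hp

private lemma mem_fr_of_mem_edge {α : Type} [DecidableEq α] (H1 : FinHypergraph α)
    {C h : Finset α} {x y : α} (hh : h ∈ H1.edges) (hx : x ∈ h) (hxC : x ∈ C)
    (hy : y ∈ h) : y ∈ H1.Fr C := by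
  have : h ∈ H1.edges.filter fun h => (h ∩ C).Nonempty :=
    Finset.mem_filter.2 ⟨hh, ⟨x, Finset.mem_inter.2 ⟨hx, hxC⟩⟩⟩
  exact Finset.le_sup (f := id) this hy

/-- Let `C_r` be an `[M_r]`-component and `M_s ⊆ Fr(C_r)`. Then every
`[M_s]`-component `C` with `C_r ∪ C` being `[M_r ∩ M_s]`-connected satisfies `C ⊆ C_r` iff
`(M_r ∩ Fr(C_r)) \ M_s = ∅`. -/
theorem monotone_iff_escape_door_empty {α : Type} [DecidableEq α] (H1 : FinHypergraph α)
    (Mr Cr Ms : Finset α) (hCr : H1.MComp Mr Cr) (hMs : Ms ⊆ H1.Fr Cr) :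
    (∀ C : Finset α, H1.MComp Ms C → H1.MConn (Mr ∩ Ms) (Cr ∪ C) → C ⊆ Cr) ↔
      (Mr ∩ H1.Fr Cr) \ Ms = ∅ := by
  classical
  obtain ⟨hne, hsub, hconnCr, hmax⟩ := hCr
  constructor
  · -- (→)
    intro hall
    by_contra hne'
    obtain ⟨Z, hZ⟩ := Finset.nonempty_iff_ne_empty.2 hne'
    rw [Finset.mem_sdiff, Finset.mem_inter] at hZ
    obtain ⟨⟨hZMr, hZFr⟩, hZMs⟩ := hZ
    -- get an edge h with Z ∈ h and h meeting Cr
    obtain ⟨h, hhmem, hZh⟩ := Finset.mem_sup.1 hZFr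
    rw [Finset.mem_filter] at hhmem
    obtain ⟨hh, W, hW⟩ := hhmem
    rw [Finset.mem_inter] at hW
    obtain ⟨hWh, hWCr⟩ := hW
    have hZnodes : Z ∈ H1.nodes := H1.edge_sub h hh hZh
    -- the [Ms]-component containing Z
    set C : Finset α := (H1.nodes \ Ms).filter (fun Y => H1.MPath Ms Z Y) with hCdef
    have hZC : Z ∈ C := by
      refine Finset.mem_filter.2 ⟨Finset.mem_sdiff.2 ⟨hZnodes, hZMs⟩, Relation.ReflTransGen.refl⟩
    have hsymm : Symmetric (H1.MPath Ms) :=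
      fun a b hab => (@Relation.ReflTransGen.stdSymm _ _ ⟨fun _ _ h => madj_symm' H1 Ms h⟩).symm a b hab
    have hCcomp : H1.MComp Ms C := by
      refine ⟨⟨Z, hZC⟩, Finset.filter_subset _ _, ?_, ?_⟩
      · intro X hX Y hY
        rw [hCdef, Finset.mem_filter] at hX hY
        exact (hsymm hX.2).trans hY.2
      · intro C' hCC' hC'sub hC'conn
        apply Finset.Subset.antisymm _ hCC'
        intro Y hY
        refine Finset.mem_filter.2 ⟨hC'sub hY, hC'conn Z (hCC' hZC) Y hY⟩
    have hlink : H1.MAdj (Mr ∩ Ms) W Z := by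
      have hWnMr : W ∉ Mr := (Finset.mem_sdiff.1 (hsub hWCr)).2
      exact ⟨h, hh, hWh, hZh, fun c => hWnMr (Finset.mem_inter.1 c).1,
        fun c => hZMs (Finset.mem_inter.1 c).2⟩
    have hconn : H1.MConn (Mr ∩ Ms) (Cr ∪ C) := by
      have hCrp : ∀ a ∈ Cr, ∀ b ∈ Cr, H1.MPath (Mr ∩ Ms) a b := fun a ha b hb =>
        mpath_mono' H1 Finset.inter_subset_left (hconnCr a ha b hb)
      have hCp : ∀ a ∈ C, ∀ b ∈ C, H1.MPath (Mr ∩ Ms) a b := fun a ha b hb =>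
        mpath_mono' H1 Finset.inter_subset_right (hCcomp.2.2.1 a ha b hb)
      intro a ha b hb
      rcases Finset.mem_union.1 ha with ha | ha <;> rcases Finset.mem_union.1 hb with hb | hb
      · exact hCrp a ha b hb
      · exact ((hCrp a ha W hWCr).tail hlink).trans (hCp Z hZC b hb)
      · exact ((hCp a ha Z hZC).tail (madj_symm' H1 _ hlink)).trans (hCrp W hWCr b hb)
      · exact hCp a ha b hb
    have := hall C hCcomp hconn hZC
    exact (Finset.mem_sdiff.1 (hsub this)).2 hZMr
  · -- (←)
    intro hemp C hC hconn
    have hMrFr : Mr ∩ H1.Fr Cr ⊆ Ms := Finset.sdiff_eq_empty_iff_subset.1 hemp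
    -- key step lemma
    have step : ∀ X Y : α, X ∈ Cr → H1.MAdj (Mr ∩ Ms) X Y → Y ∈ Cr := by
      intro X Y hX hadj
      obtain ⟨h, hh, hXh, hYh, hXn, hYn⟩ := hadj
      have hYFr : Y ∈ H1.Fr Cr := mem_fr_of_mem_edge H1 hh hXh hX hYh
      have hYnMr : Y ∉ Mr := by
        intro hc
        exact hYn (Finset.mem_inter.2 ⟨hc, hMrFr (Finset.mem_inter.2 ⟨hc, hYFr⟩)⟩)
      have hXnMr : X ∉ Mr := (Finset.mem_sdiff.1 (hsub hX)).2
      have hadjMr : H1.MAdj Mr X Y := ⟨h, hh, hXh, hYh, hXnMr, hYnMr⟩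
      have hC' : H1.MConn Mr (insert Y Cr) := by
        have paY : ∀ c ∈ Cr, H1.MPath Mr c Y := fun c hc => (hconnCr c hc X hX).tail hadjMr
        have pYa : ∀ c ∈ Cr, H1.MPath Mr Y c := fun c hc =>
          (Relation.ReflTransGen.single (madj_symm' H1 Mr hadjMr)).trans (hconnCr X hX c hc)
        intro a ha b hb
        rcases Finset.mem_insert.1 ha with ha' | ha' <;>
          rcases Finset.mem_insert.1 hb with hb' | hb'
        · rw [ha', hb']; exact Relation.ReflTransGen.refl
        · rw [ha']; exact pYa b hb'
        · rw [hb']; exact paY a ha'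
        · exact hconnCr a ha' b hb'
      have hsub' : insert Y Cr ⊆ H1.nodes \ Mr := by
        intro a ha
        rcases Finset.mem_insert.1 ha with rfl | ha
        · exact Finset.mem_sdiff.2 ⟨H1.edge_sub h hh hYh, hYnMr⟩
        · exact hsub ha
      have := hmax (insert Y Cr) (Finset.subset_insert _ _) hsub' hC'
      rw [← this]
      exact Finset.mem_insert_self _ _
    intro X hX
    obtain ⟨Z, hZ⟩ := hne
    have hpath : H1.MPath (Mr ∩ Ms) Z X :=
      hconn Z (Finset.mem_union_left _ hZ) X (Finset.mem_union_right _ hX)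
    clear hX
    induction hpath with
    | refl => exact hZ
    | tail _ hadj ih => exact step _ _ ih hadj
end
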